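/- Let J ≥ 1, h > 0, L ≥ 0, and let a_1,…,a_J ∈ ℝ satisfy |a_i − a_{i−1}| ≤ L h for 2 ≤ i ≤ J. Let Δ = diag(a_1,…,a_J) and let A₀ be the J×J tridiagonal matrix with stencil (−1, 2, −1). Then the commutator ΔA₀ − A₀Δ is tridiagonal with zero diagonal and off-diagonal entries bounded in absolute value by L h, and for every x ∈ ℝ^J, ‖(ΔA₀ − A₀Δ) x‖₂ ≤ 2 L h ‖x‖₂. -/
import Mathlib


/-- The `J×J` tridiagonal matrix with stencil `(−1, 2, −1)`. -/
def A0 (J : ℕ) : Matrix (Fin J) (Fin J) ℝ :=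
  Matrix.of fun i j =>
    if i = j then 2
    else if (i : ℕ) + 1 = (j : ℕ) ∨ (j : ℕ) + 1 = (i : ℕ) then -1
    else 0

lemma sum_indicator_le_one {J : ℕ} (p : Fin J → Prop) [DecidablePred p]
    (hp : ∀ j k, p j → p k → j = k) :
    ∑ j : Fin J, (if p j then (1 : ℝ) else 0) ≤ 1 := by
  rw [Finset.sum_boole]
  have : (Finset.univ.filter p).card ≤ 1 := by
    apply Finset.card_le_one.mpr
    intro j hj k hk
    exact hp j k (Finset.mem_filter.mp hj).2 (Finset.mem_filter.mp hk).2
  exact_mod_cast this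

/-- The commutator `ΔA₀ − A₀Δ` of the diagonal matrix
`Δ = diag(a)` (with `a` Lipschitz on the grid: `|a_i − a_{i−1}| ≤ Lh`) with the
tridiagonal matrix `A₀` is tridiagonal with zero diagonal, has off-diagonal
entries bounded by `Lh`, and satisfies `‖(ΔA₀ − A₀Δ)x‖₂ ≤ 2Lh‖x‖₂`. -/
theorem commutator_diagonal_tridiagonal_bound
    (J : ℕ) (hJ : 1 ≤ J) (h L : ℝ) (hh : 0 < h) (hL : 0 ≤ L)
    (a : Fin J → ℝ)
    (haL : ∀ i j : Fin J, (i : ℕ) + 1 = (j : ℕ) → |a j - a i| ≤ L * h) :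
    (∀ i : Fin J, (Matrix.diagonal a * A0 J - A0 J * Matrix.diagonal a) i i = 0) ∧
    (∀ i j : Fin J, (i : ℕ) + 1 ≠ (j : ℕ) → (j : ℕ) + 1 ≠ (i : ℕ) →
      (Matrix.diagonal a * A0 J - A0 J * Matrix.diagonal a) i j = 0) ∧
    (∀ i j : Fin J, ((i : ℕ) + 1 = (j : ℕ) ∨ (j : ℕ) + 1 = (i : ℕ)) →
      |(Matrix.diagonal a * A0 J - A0 J * Matrix.diagonal a) i j| ≤ L * h) ∧
    (∀ x : Fin J → ℝ,
      Real.sqrt (∑ i, ((Matrix.diagonal a * A0 J - A0 J * Matrix.diagonal a).mulVec x i)^2)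
        ≤ 2 * L * h * Real.sqrt (∑ i, (x i)^2)) := by
  have hLh : 0 ≤ L * h := mul_nonneg hL hh.le
  set C := Matrix.diagonal a * A0 J - A0 J * Matrix.diagonal a with hCdef
  have hCentry : ∀ i j, C i j = (a i - a j) * A0 J i j := by
    intro i j
    simp only [hCdef, Matrix.sub_apply, Matrix.diagonal_mul, Matrix.mul_diagonal]
    ring
  -- diagonal is zero
  have hdiag : ∀ i : Fin J, C i i = 0 := by
    intro i; rw [hCentry]; simp
  -- away from the tridiagonal band, entries vanish
  have hfar : ∀ i j : Fin J, (i : ℕ) + 1 ≠ (j : ℕ) → (j : ℕ) + 1 ≠ (i : ℕ) → C i j = 0 := by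
    intro i j h1 h2
    rcases eq_or_ne i j with rfl | hne
    · exact hdiag i
    · rw [hCentry]
      have : A0 J i j = 0 := by simp [A0, hne, h1, h2]
      simp [this]
  -- off-diagonal entries bounded by L*h
  have hoff : ∀ i j : Fin J, ((i : ℕ) + 1 = (j : ℕ) ∨ (j : ℕ) + 1 = (i : ℕ)) →
      |C i j| ≤ L * h := by
    intro i j hij
    have hne : i ≠ j := by
      intro hEq; subst hEq; omega
    have hA : A0 J i j = -1 := by simp [A0, hne, hij]
    rw [hCentry, hA]
    have : |(a i - a j) * (-1 : ℝ)| = |a j - a i| := by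
      rw [abs_mul]; simp [abs_sub_comm]
    rw [this]
    rcases hij with hij | hij
    · exact haL i j hij
    · rw [abs_sub_comm]; exact haL j i hij
  refine ⟨hdiag, hfar, hoff, ?_⟩
  -- key entrywise bound with indicator
  have hbound : ∀ i j : Fin J,
      |C i j| ≤ L * h * (if ((i : ℕ) + 1 = (j : ℕ) ∨ (j : ℕ) + 1 = (i : ℕ)) then 1 else 0) := by
    intro i j
    by_cases hij : (i : ℕ) + 1 = (j : ℕ) ∨ (j : ℕ) + 1 = (i : ℕ)
    · simpa [hij] using hoff i j hij
    · push_neg at hij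
      simp [hij.1, hij.2, hfar i j hij.1 hij.2]
  -- row sums of |C| are at most 2*L*h
  have hrow : ∀ i : Fin J, ∑ j, |C i j| ≤ 2 * (L * h) := by
    intro i
    calc ∑ j, |C i j|
        ≤ ∑ j : Fin J, L * h * (if ((i : ℕ) + 1 = (j : ℕ) ∨ (j : ℕ) + 1 = (i : ℕ)) then 1 else 0) :=
          Finset.sum_le_sum fun j _ => hbound i j
      _ ≤ ∑ j : Fin J, L * h * ((if (i : ℕ) + 1 = (j : ℕ) then (1:ℝ) else 0)
            + (if (j : ℕ) + 1 = (i : ℕ) then (1:ℝ) else 0)) := by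
          apply Finset.sum_le_sum
          intro j _
          apply mul_le_mul_of_nonneg_left _ hLh
          by_cases h1 : (i : ℕ) + 1 = (j : ℕ) <;> by_cases h2 : (j : ℕ) + 1 = (i : ℕ) <;>
            simp [h1, h2] <;> norm_num
      _ = L * h * ((∑ j : Fin J, (if (i : ℕ) + 1 = (j : ℕ) then (1:ℝ) else 0))
            + ∑ j : Fin J, (if (j : ℕ) + 1 = (i : ℕ) then (1:ℝ) else 0)) := by
          rw [← Finset.mul_sum, Finset.sum_add_distrib]
      _ ≤ L * h * (1 + 1) := by
          apply mul_le_mul_of_nonneg_left _ hLh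
          apply add_le_add
          · exact sum_indicator_le_one _ (fun j k hj hk => by apply Fin.ext; omega)
          · exact sum_indicator_le_one _ (fun j k hj hk => by apply Fin.ext; omega)
      _ = 2 * (L * h) := by ring
  -- column sums of |C| are at most 2*L*h
  have hcol : ∀ j : Fin J, ∑ i, |C i j| ≤ 2 * (L * h) := by
    intro j
    calc ∑ i, |C i j|
        ≤ ∑ i : Fin J, L * h * (if ((i : ℕ) + 1 = (j : ℕ) ∨ (j : ℕ) + 1 = (i : ℕ)) then 1 else 0) :=
          Finset.sum_le_sum fun i _ => hbound i j
      _ ≤ ∑ i : Fin J, L * h * ((if (i : ℕ) + 1 = (j : ℕ) then (1:ℝ) else 0)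
            + (if (j : ℕ) + 1 = (i : ℕ) then (1:ℝ) else 0)) := by
          apply Finset.sum_le_sum
          intro i _
          apply mul_le_mul_of_nonneg_left _ hLh
          by_cases h1 : (i : ℕ) + 1 = (j : ℕ) <;> by_cases h2 : (j : ℕ) + 1 = (i : ℕ) <;>
            simp [h1, h2] <;> norm_num
      _ = L * h * ((∑ i : Fin J, (if (i : ℕ) + 1 = (j : ℕ) then (1:ℝ) else 0))
            + ∑ i : Fin J, (if (j : ℕ) + 1 = (i : ℕ) then (1:ℝ) else 0)) := by
          rw [← Finset.mul_sum, Finset.sum_add_distrib]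
      _ ≤ L * h * (1 + 1) := by
          apply mul_le_mul_of_nonneg_left _ hLh
          apply add_le_add
          · exact sum_indicator_le_one _ (fun i k hi hk => by apply Fin.ext; omega)
          · exact sum_indicator_le_one _ (fun i k hi hk => by apply Fin.ext; omega)
      _ = 2 * (L * h) := by ring
  intro x
  -- pointwise Cauchy-Schwarz on each row
  have hpt : ∀ i : Fin J,
      (C.mulVec x i) ^ 2 ≤ (∑ j, |C i j|) * (∑ j, |C i j| * (x j) ^ 2) := by
    intro i
    have h1 : (C.mulVec x i) ^ 2 ≤ (∑ j, |C i j * x j|) ^ 2 := by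
      rw [← sq_abs (C.mulVec x i)]
      apply pow_le_pow_left₀ (abs_nonneg _)
      · simpa [Matrix.mulVec, dotProduct] using
          Finset.abs_sum_le_sum_abs (fun j => C i j * x j) Finset.univ
    refine h1.trans ?_
    apply Finset.sum_sq_le_sum_mul_sum_of_sq_eq_mul
    · intro j _; exact abs_nonneg _
    · intro j _; exact mul_nonneg (abs_nonneg _) (sq_nonneg _)
    · intro j _
      rw [abs_mul, mul_pow, sq_abs (x j)]
      ring
  -- sum the pointwise bounds
  have hsum : ∑ i, (C.mulVec x i) ^ 2 ≤ (2 * L * h) ^ 2 * ∑ i, (x i) ^ 2 := by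
    calc ∑ i, (C.mulVec x i) ^ 2
        ≤ ∑ i, (∑ j, |C i j|) * (∑ j, |C i j| * (x j) ^ 2) :=
          Finset.sum_le_sum fun i _ => hpt i
      _ ≤ ∑ i, 2 * (L * h) * (∑ j, |C i j| * (x j) ^ 2) := by
          apply Finset.sum_le_sum
          intro i _
          apply mul_le_mul_of_nonneg_right (hrow i)
          exact Finset.sum_nonneg fun j _ => mul_nonneg (abs_nonneg _) (sq_nonneg _)
      _ = 2 * (L * h) * ∑ j, (∑ i, |C i j|) * (x j) ^ 2 := by
          rw [← Finset.mul_sum, Finset.sum_comm]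
          congr 1
          exact Finset.sum_congr rfl fun j _ => (Finset.sum_mul _ _ _).symm
      _ ≤ 2 * (L * h) * ∑ j, 2 * (L * h) * (x j) ^ 2 := by
          apply mul_le_mul_of_nonneg_left _ (by positivity)
          apply Finset.sum_le_sum
          intro j _
          exact mul_le_mul_of_nonneg_right (hcol j) (sq_nonneg _)
      _ = (2 * L * h) ^ 2 * ∑ i, (x i) ^ 2 := by
          rw [← Finset.mul_sum]; ring
  -- take square roots
  have := Real.sqrt_le_sqrt hsum
  refine this.trans ?_
  rw [Real.sqrt_mul (sq_nonneg _), Real.sqrt_sq (by positivity)]
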